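/- The center-to-edges diagonal enumeration E : ℤ⁺ × ℤ⁺ → ℤ⁺ defined by E(i,j) = (i(i+1) + (j-1)(2i+j-4))/2 if i ≥ j, and E(i,j) = (i(i+1) + (j-1)(2i+j-4))/2 + 2(j-i) - 1 if i < j, is a bijection from the set of pairs of positive integers onto the positive integers. -/

import Mathlib

/-- The center-to-edges diagonal enumeration:
`E(i,j) = (i(i+1) + (j-1)(2i+j-4))/2` if `i ≥ j`, and
`E(i,j) = (i(i+1) + (j-1)(2i+j-4))/2 + 2(j-i) - 1` if `i < j`.
(The numerator is always even, so the division is exact.) -/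
def E (i j : ℤ) : ℤ :=
  if j ≤ i then (i * (i + 1) + (j - 1) * (2 * i + j - 4)) / 2
  else (i * (i + 1) + (j - 1) * (2 * i + j - 4)) / 2 + 2 * (j - i) - 1

/-- Half triangular-type number: `dd s = s (s-1) / 2`. -/
def dd (s : ℤ) : ℤ := s * (s - 1) / 2

lemma two_dd (s : ℤ) : 2 * dd s = s * (s - 1) := by
  have h : (2:ℤ) ∣ s * (s - 1) := by
    have h1 : Even ((s - 1) * (s - 1 + 1)) := Int.even_mul_succ_self (s - 1)
    have h2 : (s - 1) * (s - 1 + 1) = s * (s - 1) := by ring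
    rw [h2] at h1
    exact h1.two_dvd
  exact Int.mul_ediv_cancel' h

lemma E_of_le (i j : ℤ) (h : j ≤ i) : E i j = dd (i + j) + 2 - 2 * j := by
  rw [E, if_pos h]
  have h2 := two_dd (i + j)
  have key : i * (i + 1) + (j - 1) * (2 * i + j - 4) = 2 * (dd (i + j) + 2 - 2 * j) := by
    linear_combination -h2
  rw [key, Int.mul_ediv_cancel_left _ two_ne_zero]

lemma E_of_lt (i j : ℤ) (h : i < j) : E i j = dd (i + j) + 1 - 2 * i := by
  rw [E, if_neg (not_le.mpr h)]
  have h2 := two_dd (i + j)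
  have key : i * (i + 1) + (j - 1) * (2 * i + j - 4) = 2 * (dd (i + j) + 2 - 2 * j) := by
    linear_combination -h2
  rw [key, Int.mul_ediv_cancel_left _ two_ne_zero]
  ring

lemma dd_mono {a b : ℤ} (ha : 1 ≤ a) (hab : a ≤ b) : dd a ≤ dd b := by
  nlinarith [two_dd a, two_dd b]

lemma E_range {i j : ℤ} (hi : 1 ≤ i) (hj : 1 ≤ j) :
    dd (i + j - 1) < E i j ∧ E i j ≤ dd (i + j) := by
  have h1 := two_dd (i + j)
  have h2 := two_dd (i + j - 1)
  rcases le_or_gt j i with h | h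
  · rw [E_of_le i j h]
    constructor <;> nlinarith
  · rw [E_of_lt i j h]
    constructor <;> nlinarith

lemma diag_eq {i j i' j' : ℤ} (hi : 1 ≤ i) (hj : 1 ≤ j) (hi' : 1 ≤ i') (hj' : 1 ≤ j')
    (h : E i j = E i' j') : i + j = i' + j' := by
  by_contra hne
  obtain ⟨h1l, h1r⟩ := E_range hi hj
  obtain ⟨h2l, h2r⟩ := E_range hi' hj'
  rcases lt_or_gt_of_ne hne with hlt | hlt
  · have : dd (i + j) ≤ dd (i' + j' - 1) := dd_mono (by omega) (by omega)
    linarith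
  · have : dd (i' + j') ≤ dd (i + j - 1) := dd_mono (by omega) (by omega)
    linarith

lemma E_inj {i j i' j' : ℤ} (hi : 1 ≤ i) (hj : 1 ≤ j) (hi' : 1 ≤ i') (hj' : 1 ≤ j')
    (h : E i j = E i' j') : i = i' ∧ j = j' := by
  have hs : i + j = i' + j' := diag_eq hi hj hi' hj' h
  rcases le_or_gt j i with hc | hc <;> rcases le_or_gt j' i' with hc' | hc'
  · rw [E_of_le i j hc, E_of_le i' j' hc', hs] at h
    constructor <;> linarith
  · rw [E_of_le i j hc, E_of_lt i' j' hc', hs] at h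
    exfalso
    have : 2 * i' = 2 * j - 1 := by linarith
    omega
  · rw [E_of_lt i j hc, E_of_le i' j' hc', hs] at h
    exfalso
    have : 2 * i = 2 * j' - 1 := by linarith
    omega
  · rw [E_of_lt i j hc, E_of_lt i' j' hc', hs] at h
    constructor <;> linarith

lemma E_surj : ∀ n : ℤ, 1 ≤ n → ∃ i j : ℤ, 1 ≤ i ∧ 1 ≤ j ∧ E i j = n := by
  intro n hn
  refine Int.le_induction (motive := fun n _ => ∃ i j : ℤ, 1 ≤ i ∧ 1 ≤ j ∧ E i j = n) ?_ ?_ n hn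
  · refine ⟨1, 1, le_refl _, le_refl _, ?_⟩
    rw [E_of_le 1 1 le_rfl]
    norm_num [dd]
  intro n hn ih
  obtain ⟨i, j, hi, hj, hE⟩ := ih
  rcases lt_or_ge i j with hij | hij
  · -- from (i,j) with i < j go to (j,i)
    refine ⟨j, i, by omega, hi, ?_⟩
    rw [E_of_le j i hij.le, add_comm j i]
    rw [E_of_lt i j hij] at hE
    linarith
  · rcases lt_or_ge 1 j with hj2 | hj1
    · -- j ≥ 2, j ≤ i : go to (j-1, i+1)
      refine ⟨j - 1, i + 1, by omega, by omega, ?_⟩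
      rw [E_of_lt (j - 1) (i + 1) (by omega),
        show j - 1 + (i + 1) = i + j from by ring]
      rw [E_of_le i j hij] at hE
      linarith
    · -- j = 1
      have hj1' : j = 1 := le_antisymm hj1 hj
      subst hj1'
      rw [E_of_le i 1 hi] at hE
      rcases Int.even_or_odd i with ⟨k, hk⟩ | ⟨k, hk⟩
      · subst hk
        refine ⟨k + 1, k + 1, by omega, by omega, ?_⟩
        rw [E_of_le (k + 1) (k + 1) le_rfl]
        linarith [two_dd (k + 1 + (k + 1)), two_dd (k + k + 1), hE]
      · subst hk
        refine ⟨k + 1, k + 2, by omega, by omega, ?_⟩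
        rw [E_of_lt (k + 1) (k + 2) (by omega)]
        linarith [two_dd (k + 1 + (k + 2)), two_dd (2 * k + 1 + 1), hE]

/-- `E` is a bijection from the set of pairs of positive integers onto the positive
integers. -/
theorem center_to_edges_bijOn :
    Set.BijOn (fun p : ℤ × ℤ => E p.1 p.2)
      {p : ℤ × ℤ | 0 < p.1 ∧ 0 < p.2} {n : ℤ | 0 < n} := by
  refine ⟨?_, ?_, ?_⟩
  · rintro ⟨i, j⟩ ⟨hi, hj⟩
    have hr := (E_range (i := i) (j := j) (by omega) (by omega)).1
    have h0 : dd 1 = 0 := by norm_num [dd]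
    have hm : dd 1 ≤ dd (i + j - 1) := dd_mono le_rfl (by omega)
    show 0 < E i j
    linarith
  · rintro ⟨i, j⟩ ⟨hi, hj⟩ ⟨i', j'⟩ ⟨hi', hj'⟩ h
    have := E_inj (i := i) (j := j) (i' := i') (j' := j')
      (by omega) (by omega) (by omega) (by omega) h
    simp [Prod.ext_iff, this.1, this.2]
  · intro n hn
    have hn' : 1 ≤ n := by simpa [Int.lt_iff_add_one_le] using hn
    obtain ⟨i, j, hi, hj, hE⟩ := E_surj n hn'
    exact ⟨(i, j), ⟨by omega, by omega⟩, hE⟩
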